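/- Let R be a commutative ring, A an Artinian R-module, and S a multiplicatively closed subset of R. Then the localization S⁻¹A, regarded as an R-module, is isomorphic to a submodule of A; that is, there exists an injective R-linear map from S⁻¹A to A. -/

import Mathlib

/-!
STATEMENT 10: Let R be a commutative ring, A an Artinian R-module, and S a multiplicatively
closed subset of R. Then S⁻¹A, regarded as an R-module, is isomorphic to a submodule of A;
that is, there exists an injective R-linear map S⁻¹A → A.
-/

universe u v

section Aux

variable {R : Type u} [CommRing R] {A : Type v} [AddCommGroup A] [Module R A]

/-- An element is `S`-good if its cyclic submodule has no `S`-torsion. -/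
def IsGoodElt (S : Submonoid R) (b : A) : Prop :=
  ∀ (s : S) (r : R), (s : R) • r • b = 0 → r • b = 0

theorem isGoodElt_zero (S : Submonoid R) : IsGoodElt S (0 : A) := by
  intro s r _
  rw [smul_zero]

/-- In an Artinian module, if multiplication by `c` is injective on the cyclic module `R • x`,
then `x` is in `c • R • x`. -/
theorem exists_smul_eq_of_inj [IsArtinian R A] (x : A) (c : R)
    (hinj : ∀ r : R, c • r • x = 0 → r • x = 0) : ∃ u : R, c • u • x = x := by
  set M := Submodule.span R {x} with hM
  have hxM : x ∈ M := Submodule.mem_span_singleton_self x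
  have hmap : ∀ m ∈ M, (LinearMap.lsmul R A c) m ∈ M := fun m hm => M.smul_mem c hm
  set σ : M →ₗ[R] M := (LinearMap.lsmul R A c).restrict hmap with hσdef
  have hσinj : Function.Injective σ := by
    intro m₁ m₂ h
    obtain ⟨r, hr⟩ := Submodule.mem_span_singleton.mp (M.sub_mem m₁.2 m₂.2)
    have h0 : c • ((m₁ : A) - m₂) = 0 := by
      have h' := congrArg Subtype.val h
      simp only [hσdef, LinearMap.restrict_apply, LinearMap.lsmul_apply] at h'
      rw [smul_sub, h', sub_self]
    rw [← hr] at h0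
    have h1 := hinj r h0
    rw [hr] at h1
    exact Subtype.ext (sub_eq_zero.mp h1)
  obtain ⟨w, hw⟩ := IsArtinian.surjective_of_injective_endomorphism σ hσinj ⟨x, hxM⟩
  obtain ⟨u, hu⟩ := Submodule.mem_span_singleton.mp w.2
  refine ⟨u, ?_⟩
  have hw' := congrArg Subtype.val hw
  simp only [hσdef, LinearMap.restrict_apply, LinearMap.lsmul_apply] at hw'
  rw [← hu] at hw'
  exact hw'

theorem IsGoodElt.smul_good {S : Submonoid R} {b : A} (hb : IsGoodElt S b) (r : R) :
    IsGoodElt S (r • b) := by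
  intro s r' h
  have h2 : (s : R) • (r' * r) • b = 0 := by rw [mul_smul]; exact h
  have h3 := hb s (r' * r) h2
  rw [mul_smul] at h3
  exact h3

theorem IsGoodElt.add_good [IsArtinian R A] {S : Submonoid R} {a b : A}
    (ha : IsGoodElt S a) (hb : IsGoodElt S b) : IsGoodElt S (a + b) := by
  intro s r h
  have hinj : ∀ r' : R, (s : R) • r' • ((a, b) : A × A) = 0 → r' • ((a, b) : A × A) = 0 := by
    intro r' h'
    have h1 : (s : R) • r' • a = 0 := congrArg Prod.fst h'
    have h2 : (s : R) • r' • b = 0 := congrArg Prod.snd h'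
    exact Prod.ext (ha s r' h1) (hb s r' h2)
  obtain ⟨u, hu⟩ := exists_smul_eq_of_inj ((a, b) : A × A) (s : R) hinj
  have hua : (s : R) • u • a = a := congrArg Prod.fst hu
  have hub : (s : R) • u • b = b := congrArg Prod.snd hu
  have key : (s : R) • u • (a + b) = a + b := by
    rw [smul_add, smul_add, hua, hub]
  calc r • (a + b) = r • ((s : R) • u • (a + b)) := by rw [key]
    _ = u • ((s : R) • r • (a + b)) := by
        simp only [smul_smul]
        exact congrArg (fun c : R => c • (a + b)) (by ring)
    _ = 0 := by rw [h, smul_zero]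

/-- Every element of an Artinian module decomposes as an `S`-torsion element
plus an `S`-good element. -/
theorem exists_torsion_add_good (S : Submonoid R) [IsArtinian R A] (a : A) :
    ∃ n b : A, a = n + b ∧ (∃ s : S, (s : R) • n = 0) ∧ IsGoodElt S b := by
  set M := Submodule.span R {a} with hM
  have haM : a ∈ M := Submodule.mem_span_singleton_self a
  set F : Set (Submodule R A) :=
    Set.range (fun s : S => Submodule.map (LinearMap.lsmul R A (s : R)) M) with hF
  obtain ⟨D, hDF, hmin⟩ := IsArtinian.set_has_minimal F ⟨_, ⟨1, rfl⟩⟩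
  obtain ⟨s₀, hs₀⟩ := hDF
  have hs₀' : Submodule.map (LinearMap.lsmul R A ((s₀ : S) : R)) M = D := hs₀
  -- for all t : S, map (lsmul (t * s₀)) M = D
  have hts : ∀ t : S, Submodule.map (LinearMap.lsmul R A ((t : R) * (s₀ : R))) M = D := by
    intro t
    have hmem : Submodule.map (LinearMap.lsmul R A (((t * s₀ : S) : R))) M ∈ F :=
      ⟨t * s₀, rfl⟩
    have hcoe : ((t * s₀ : S) : R) = (t : R) * (s₀ : R) := rfl
    rw [hcoe] at hmem
    have hle : Submodule.map (LinearMap.lsmul R A ((t : R) * (s₀ : R))) M ≤ D := by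
      rw [← hs₀']
      rintro x ⟨m, hm, rfl⟩
      refine ⟨(t : R) • m, M.smul_mem _ hm, ?_⟩
      simp only [LinearMap.lsmul_apply, smul_smul]
      rw [mul_comm]
    exact hle.lt_or_eq.resolve_left (hmin _ hmem)
  -- s₀ kills all torsion of M
  have hkill : ∀ z ∈ M, ∀ t : S, (t : R) • z = 0 → (s₀ : R) • z = 0 := by
    intro z hz t htz
    have h1 : (s₀ : R) • a ∈ Submodule.map (LinearMap.lsmul R A ((t : R) * (s₀ : R))) M := by
      rw [hts t, ← hs₀']
      exact ⟨a, haM, rfl⟩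
    obtain ⟨m, hm, hm'⟩ := h1
    obtain ⟨w, hw⟩ := Submodule.mem_span_singleton.mp hm
    obtain ⟨r, hr⟩ := Submodule.mem_span_singleton.mp hz
    simp only [LinearMap.lsmul_apply] at hm'
    rw [← hw] at hm'
    -- hm' : ((t:R) * (s₀:R)) • w • a = (s₀:R) • a
    calc (s₀ : R) • z = r • ((s₀ : R) • a) := by rw [← hr, smul_comm]
      _ = r • (((t : R) * (s₀ : R)) • w • a) := by rw [hm']
      _ = ((s₀ : R) * w) • ((t : R) • r • a) := by
          simp only [smul_smul]
          exact congrArg (fun c : R => c • a) (by ring)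
      _ = ((s₀ : R) * w) • ((t : R) • z) := by rw [hr]
      _ = 0 := by rw [htz, smul_zero]
  -- decompose a
  have h2 : (s₀ : R) • a ∈ Submodule.map (LinearMap.lsmul R A ((s₀ : R) * (s₀ : R))) M := by
    rw [hts s₀, ← hs₀']
    exact ⟨a, haM, rfl⟩
  obtain ⟨m, hm, hm'⟩ := h2
  obtain ⟨v, hv⟩ := Submodule.mem_span_singleton.mp hm
  simp only [LinearMap.lsmul_apply] at hm'
  rw [← hv] at hm'
  -- hm' : ((s₀:R) * (s₀:R)) • v • a = (s₀:R) • a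
  refine ⟨a - ((s₀ : R) * v) • a, ((s₀ : R) * v) • a, by abel, ⟨s₀, ?_⟩, ?_⟩
  · rw [smul_sub, ← hm']
    simp only [smul_smul]
    rw [sub_eq_zero]
    exact congrArg (fun c : R => c • a) (by ring)
  · -- goodness of (s₀ * v) • a
    intro s r hsr
    set z : A := r • ((s₀ : R) * v) • a with hz
    have hzM : z ∈ M := M.smul_mem _ (M.smul_mem _ haM)
    have hs₀z : (s₀ : R) • z = 0 := hkill z hzM s hsr
    have hzA : z = (r * v) • ((s₀ : R) • a) := by
      rw [hz]
      simp only [smul_smul]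
      exact congrArg (fun c : R => c • a) (by ring)
    have hzeq : v • ((s₀ : R) • z) = z := by
      conv_rhs => rw [hzA, ← hm']
      conv_lhs => rw [hz]
      simp only [smul_smul]
      exact congrArg (fun c : R => c • a) (by ring)
    show z = 0
    rw [← hzeq, hs₀z, smul_zero]

variable (S : Submonoid R) (A)

/-- The submodule of `S`-good elements. -/
def goodSubmodule [IsArtinian R A] : Submodule R A where
  carrier := {b | IsGoodElt S b}
  zero_mem' := isGoodElt_zero S
  add_mem' := fun ha hb => ha.add_good hb
  smul_mem' := fun r _ hb => hb.smul_good r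

/-- The `S`-torsion submodule. -/
def torsionSubmodule : Submodule R A where
  carrier := {a | ∃ s : S, (s : R) • a = 0}
  zero_mem' := ⟨1, smul_zero _⟩
  add_mem' := by
    rintro x y ⟨s, hs⟩ ⟨t, ht⟩
    refine ⟨s * t, ?_⟩
    have hcoe : ((s * t : S) : R) = (s : R) * (t : R) := rfl
    have h1 : ((s : R) * (t : R)) • x = 0 := by rw [mul_comm, mul_smul, hs, smul_zero]
    have h2 : ((s : R) * (t : R)) • y = 0 := by rw [mul_smul, ht, smul_zero]
    rw [hcoe, smul_add, h1, h2, add_zero]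
  smul_mem' := by
    rintro r x ⟨s, hs⟩
    exact ⟨s, by rw [smul_comm, hs, smul_zero]⟩

variable {S A}

theorem mem_goodSubmodule_iff [IsArtinian R A] {b : A} :
    b ∈ goodSubmodule A S ↔ IsGoodElt S b := Iff.rfl

theorem mem_torsionSubmodule_iff {a : A} :
    a ∈ torsionSubmodule A S ↔ ∃ s : S, (s : R) • a = 0 := Iff.rfl

theorem isCompl_good_torsion [IsArtinian R A] :
    IsCompl (goodSubmodule A S) (torsionSubmodule A S) := by
  constructor
  · rw [Submodule.disjoint_def]
    intro x hxB hxT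
    obtain ⟨s, hs⟩ := hxT
    have := hxB s 1 (by rw [one_smul]; exact hs)
    rwa [one_smul] at this
  · rw [codisjoint_iff, Submodule.eq_top_iff']
    intro a
    obtain ⟨n, b, hab, hn, hb⟩ := exists_torsion_add_good S a
    exact Submodule.mem_sup.mpr ⟨b, hb, n, hn, by rw [hab, add_comm]⟩

end Aux

theorem localization_of_artinian_embeds
    {R : Type u} [CommRing R] (S : Submonoid R)
    (A : Type v) [AddCommGroup A] [Module R A] [IsArtinian R A] :
    ∃ f : LocalizedModule S A →ₗ[R] A, Function.Injective f := by
  classical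
  set B := goodSubmodule A S with hB
  set T := torsionSubmodule A S with hT
  have hcompl : IsCompl B T := isCompl_good_torsion
  set g : A →ₗ[R] B := Submodule.linearProjOfIsCompl B T hcompl with hg
  have hunit : ∀ x : S, IsUnit (algebraMap R (Module.End R B) (x : R)) := by
    intro x
    rw [Module.End.isUnit_iff]
    constructor
    · intro b₁ b₂ h
      simp only [Module.algebraMap_end_apply] at h
      have h' : (x : R) • ((b₁ : A) - b₂) = 0 := by
        rw [smul_sub, sub_eq_zero]
        exact congrArg Subtype.val h
      have hgood : IsGoodElt S ((b₁ : A) - b₂) := B.sub_mem b₁.2 b₂.2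
      have h0 := hgood x 1 (by rw [one_smul]; exact h')
      rw [one_smul] at h0
      exact Subtype.ext (sub_eq_zero.mp h0)
    · intro b
      obtain ⟨u, hu⟩ := exists_smul_eq_of_inj (b : A) (x : R) (fun r h => b.2 x r h)
      refine ⟨⟨u • (b : A), B.smul_mem u b.2⟩, ?_⟩
      apply Subtype.ext
      simp only [Module.algebraMap_end_apply]
      exact hu
  refine ⟨B.subtype.comp (LocalizedModule.lift S g hunit), ?_⟩
  have hker : ∀ (a : A) (s : S),
      B.subtype.comp (LocalizedModule.lift S g hunit) (LocalizedModule.mk a s) = 0 →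
      LocalizedModule.mk a s = 0 := by
    intro a s hz
    rw [LinearMap.comp_apply, LocalizedModule.lift_mk] at hz
    have h1 : (↑(hunit s).unit⁻¹ : Module.End R B) (g a) = 0 :=
      (Submodule.coe_eq_zero).mp hz
    rw [Module.End.algebraMap_isUnit_inv_apply_eq_iff, smul_zero] at h1
    have haT : a ∈ T := (Submodule.linearProjOfIsCompl_apply_eq_zero_iff hcompl).mp h1
    obtain ⟨t, ht⟩ := haT
    rw [← LocalizedModule.zero_mk s, LocalizedModule.mk_eq]
    refine ⟨t, ?_⟩
    show t • s • a = t • s • (0 : A)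
    rw [smul_zero, smul_zero, Submonoid.smul_def, Submonoid.smul_def, smul_comm, ht, smul_zero]
  intro x y hxy
  have hsub : B.subtype.comp (LocalizedModule.lift S g hunit) (x - y) = 0 := by
    rw [map_sub, hxy, sub_self]
  have h0 : x - y = 0 := by
    have := LocalizedModule.induction_on
      (β := fun z => B.subtype.comp (LocalizedModule.lift S g hunit) z = 0 → z = 0)
      hker (x - y)
    exact this hsub
  exact sub_eq_zero.mp h0
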